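/- Let (Ω, 𝓕, P) be a probability space with a filtration (𝓕_j)_{j≥0}. Let (κ_j)_{j≥0} be positive-integer-valued random variables with κ_j measurable with respect to 𝓕_j, and set κ̄_J = Σ_{j=0}^{J−1} κ_j. Let (D_j)_{j≥1} be integrable real random variables with D_j measurable with respect to 𝓕_j, E[D_j | 𝓕_{j−1}] = 0 almost surely, and E[D_j² | 𝓕_{j−1}] ≤ B·κ_{j−1} almost surely for a constant B < ∞. Suppose there exist a real m > 1 and a random variable 𝓘 such that κ_j / m^j → 𝓘 almost surely as j → ∞. Then for every δ > 0, on the event {𝓘 > δ} it holds almost surely that (1/κ̄_J)·Σ_{j=1}^{J} D_j → 0 as J → ∞. -/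

import Mathlib

open MeasureTheory Filter

lemma aux_prod_int {Ω : Type*} {m0 : MeasurableSpace Ω} {P : Measure Ω} {f g : Ω → ℝ}
    (hf : AEStronglyMeasurable f P) (hg : AEStronglyMeasurable g P)
    (hf2 : Integrable (fun ω => f ω ^ 2) P) (hg2 : Integrable (fun ω => g ω ^ 2) P) :
    Integrable (fun ω => f ω * g ω) P := by
  refine Integrable.mono' ((hf2.add hg2).div_const 2) (hf.mul hg) ?_
  filter_upwards with ω
  have h : ‖f ω * g ω‖ = |f ω| * |g ω| := by rw [Real.norm_eq_abs, abs_mul]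
  rw [h]
  have h1 : |f ω| ^ 2 = f ω ^ 2 := sq_abs _
  have h2 : |g ω| ^ 2 = g ω ^ 2 := sq_abs _
  simp only [Pi.add_apply]; nlinarith [sq_nonneg (|f ω| - |g ω|)]

lemma aux_pullout {Ω : Type*} {m0 : MeasurableSpace Ω} (P : Measure Ω) [IsProbabilityMeasure P]
    {mm : MeasurableSpace Ω} (hm : mm ≤ m0) {f X : Ω → ℝ}
    (hX : StronglyMeasurable[mm] X) (hf : Integrable f P) (hfX : Integrable (X * f) P)
    (h0 : P[f|mm] =ᵐ[P] 0) : ∫ ω, X ω * f ω ∂P = 0 := by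
  have h1 : P[X * f|mm] =ᵐ[P] X * P[f|mm] := condExp_mul_of_stronglyMeasurable_left hX hfX hf
  have h2 : P[X * f|mm] =ᵐ[P] 0 := by
    refine h1.trans ?_
    filter_upwards [h0] with ω h
    simp [Pi.mul_apply, h]
  calc ∫ ω, X ω * f ω ∂P = ∫ ω, (X * f) ω ∂P := by simp [Pi.mul_apply]
    _ = ∫ ω, (P[X * f|mm]) ω ∂P := (integral_condExp hm).symm
    _ = ∫ ω, (0 : Ω → ℝ) ω ∂P := integral_congr_ae h2
    _ = 0 := by simp

/-- Epoch-level martingale strong law of large numbers for supercritical branching-type data: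
if `(D j)` is a martingale difference sequence with conditional variances bounded by
`B * κ (j-1)`, and the epoch sizes `κ j` grow like `m^j · 𝓘` with `m > 1`, then on the event
`{𝓘 > δ}` the normalized sums `(∑_{j=1}^J D j) / (∑_{j=0}^{J-1} κ j)` tend to `0` a.s. -/
theorem stmt_9 {Ω : Type*} {m0 : MeasurableSpace Ω} (P : Measure Ω) [IsProbabilityMeasure P]
    (𝓕 : ℕ → MeasurableSpace Ω) (hle : ∀ j, 𝓕 j ≤ m0) (hmono : Monotone 𝓕)
    (κ : ℕ → Ω → ℕ) (hκpos : ∀ j ω, 0 < κ j ω)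
    (hκmeas : ∀ j, Measurable[𝓕 j] (κ j))
    (D : ℕ → Ω → ℝ)
    (hDmeas : ∀ j, 1 ≤ j → Measurable[𝓕 j] (D j))
    (hDint : ∀ j, 1 ≤ j → Integrable (D j) P)
    (hDsqint : ∀ j, 1 ≤ j → Integrable (fun ω => (D j ω) ^ 2) P)
    (hcond0 : ∀ j, 1 ≤ j → P[D j | 𝓕 (j - 1)] =ᵐ[P] 0)
    (B : ℝ)
    (hcondvar : ∀ j, 1 ≤ j →
      ∀ᵐ ω ∂P, (P[fun ω' => (D j ω') ^ 2 | 𝓕 (j - 1)]) ω ≤ B * (κ (j - 1) ω : ℝ))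
    (m : ℝ) (hm : 1 < m)
    (I : Ω → ℝ)
    (hconv : ∀ᵐ ω ∂P, Tendsto (fun j => (κ j ω : ℝ) / m ^ j) atTop (nhds (I ω)))
    (δ : ℝ) (hδ : 0 < δ) :
    ∀ᵐ ω ∂P, δ < I ω →
      Tendsto (fun J => (∑ j ∈ Finset.Icc 1 J, D j ω) / ∑ j ∈ Finset.range J, (κ j ω : ℝ))
        atTop (nhds 0) := by
  have hmpos : (0:ℝ) < m := lt_trans one_pos hm
  set B' : ℝ := max B 0 with hB'def
  have hB' : (0:ℝ) ≤ B' := le_max_right _ _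
  have hcondvar' : ∀ j, 1 ≤ j →
      ∀ᵐ ω ∂P, (P[fun ω' => (D j ω') ^ 2 | 𝓕 (j - 1)]) ω ≤ B' * (κ (j - 1) ω : ℝ) := by
    intro j hj
    filter_upwards [hcondvar j hj] with ω h
    refine h.trans ?_
    have : (0:ℝ) ≤ (κ (j-1) ω : ℝ) := Nat.cast_nonneg _
    exact mul_le_mul_of_nonneg_right (le_max_left _ _) this
  -- truncation sets and indicators
  set A : ℕ → ℕ → Set Ω := fun K j => {ω | ∀ i < j, (κ i ω : ℝ) ≤ (K:ℝ) * m ^ i} with hAdef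
  set g : ℕ → ℕ → Ω → ℝ := fun K j => (A K j).indicator (fun _ => (1:ℝ)) with hgdef
  have hg01 : ∀ K j ω, g K j ω = 0 ∨ g K j ω = 1 := by
    intro K j ω
    by_cases hω : ω ∈ A K j
    · right; simp [hgdef, Set.indicator_of_mem hω]
    · left; simp [hgdef, Set.indicator_of_notMem hω]
  have hgone : ∀ K j ω, ω ∈ A K j → g K j ω = 1 := by
    intro K j ω hω; simp [hgdef, Set.indicator_of_mem hω]
  have hκRmeas : ∀ i, Measurable[𝓕 i] (fun ω => (κ i ω : ℝ)) := by
    intro i; exact measurable_from_top.comp (hκmeas i)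
  have hA : ∀ K j, 1 ≤ j → MeasurableSet[𝓕 (j - 1)] (A K j) := by
    intro K j hj
    have heq : A K j = ⋂ i, ⋂ (_ : i < j), {ω | (κ i ω : ℝ) ≤ (K:ℝ) * m ^ i} := by
      ext ω; simp [hAdef]
    rw [heq]
    refine MeasurableSet.iInter fun i => MeasurableSet.iInter fun hi => ?_
    have h1 : MeasurableSet[𝓕 i] {ω | (κ i ω : ℝ) ≤ (K:ℝ) * m ^ i} :=
      (hκRmeas i) measurableSet_Iic
    exact hmono (by omega : i ≤ j - 1) _ h1
  have hgmeas : ∀ K j, 1 ≤ j → StronglyMeasurable[𝓕 (j - 1)] (g K j) := by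
    intro K j hj
    exact stronglyMeasurable_const.indicator (hA K j hj)
  -- truncated increments
  set Dg : ℕ → ℕ → Ω → ℝ := fun K j ω => D j ω * g K j ω with hDgdef
  have hDgm0 : ∀ K j, 1 ≤ j → Measurable (Dg K j) := by
    intro K j hj
    have h1 : Measurable (D j) := (hDmeas j hj).mono (hle j) le_rfl
    have h2 : Measurable (g K j) :=
      ((hgmeas K j hj).mono (hle (j-1))).measurable
    exact h1.mul h2
  have hDg_abs : ∀ K j ω, |Dg K j ω| ≤ |D j ω| := by
    intro K j ω
    rcases hg01 K j ω with h | h <;> simp [hDgdef, abs_mul, h]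
  have hDg_sq : ∀ K j ω, Dg K j ω ^ 2 = g K j ω * D j ω ^ 2 := by
    intro K j ω
    rcases hg01 K j ω with h | h <;> simp [hDgdef, h] <;> ring
  have hDg2int : ∀ K j, 1 ≤ j → Integrable (fun ω => Dg K j ω ^ 2) P := by
    intro K j hj
    refine Integrable.mono' (hDsqint j hj) ((hDgm0 K j hj).pow_const 2).aestronglyMeasurable ?_
    filter_upwards with ω
    have := hDg_abs K j ω
    rw [Real.norm_eq_abs, abs_of_nonneg (sq_nonneg _)]
    nlinarith [abs_nonneg (Dg K j ω), abs_nonneg (D j ω), sq_abs (Dg K j ω), sq_abs (D j ω)]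
  have hprodint : ∀ K i j, 1 ≤ i → 1 ≤ j →
      Integrable (fun ω => Dg K j ω * Dg K i ω) P := by
    intro K i j hi hj
    exact aux_prod_int (hDgm0 K j hj).aestronglyMeasurable (hDgm0 K i hi).aestronglyMeasurable
      (hDg2int K j hj) (hDg2int K i hi)
  -- orthogonality of truncated increments
  have hcross : ∀ K i j, 1 ≤ i → i < j → ∫ ω, Dg K j ω * Dg K i ω ∂P = 0 := by
    intro K i j hi hij
    have hj : 1 ≤ j := by omega
    set X : Ω → ℝ := fun ω => g K j ω * Dg K i ω with hXdef
    have hXmeas : StronglyMeasurable[𝓕 (j-1)] X := by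
      refine (hgmeas K j hj).mul (StronglyMeasurable.mul ?_ ?_)
      · exact ((hDmeas i hi).mono (hmono (by omega : i ≤ j - 1)) le_rfl).stronglyMeasurable
      · exact (hgmeas K i hi).mono (hmono (by omega : i - 1 ≤ j - 1))
    have heq : (X * D j) = fun ω => Dg K j ω * Dg K i ω := by
      funext ω; simp only [Pi.mul_apply, hXdef, hDgdef]; ring
    have hfX : Integrable (X * D j) P := by rw [heq]; exact hprodint K i j hi hj
    have h0 := aux_pullout P (hle (j-1)) hXmeas (hDint j hj) hfX (hcond0 j hj)
    calc ∫ ω, Dg K j ω * Dg K i ω ∂P = ∫ ω, X ω * D j ω ∂P := by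
          refine integral_congr_ae (Eventually.of_forall fun ω => ?_)
          simp only [hXdef, hDgdef]; ring
      _ = 0 := h0
  -- diagonal bound
  have hdiag : ∀ K j, 1 ≤ j → ∫ ω, Dg K j ω ^ 2 ∂P ≤ B' * K * m ^ (j - 1) := by
    intro K j hj
    have hgm0 : Measurable (g K j) := ((hgmeas K j hj).mono (hle (j-1))).measurable
    have hgD2int : Integrable (g K j * fun ω => D j ω ^ 2) P := by
      refine Integrable.bdd_mul (hDsqint j hj) hgm0.aestronglyMeasurable (c := 1) (Eventually.of_forall fun ω => ?_)
      rcases hg01 K j ω with h | h <;> simp [h]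
    have hpull : P[g K j * fun ω => D j ω ^ 2|𝓕 (j-1)]
        =ᵐ[P] g K j * P[fun ω => D j ω ^ 2|𝓕 (j-1)] :=
      condExp_mul_of_stronglyMeasurable_left (hgmeas K j hj) hgD2int (hDsqint j hj)
    have hbound : ∀ᵐ ω ∂P,
        g K j ω * (P[fun ω' => D j ω' ^ 2|𝓕 (j-1)]) ω ≤ B' * K * m ^ (j - 1) := by
      filter_upwards [hcondvar' j hj] with ω h1
      by_cases hω : ω ∈ A K j
      · have hg1 : g K j ω = 1 := hgone K j ω hω
        have hκb : (κ (j-1) ω : ℝ) ≤ (K:ℝ) * m ^ (j-1) := hω (j-1) (by omega)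
        rw [hg1, one_mul]
        calc (P[fun ω' => D j ω' ^ 2|𝓕 (j-1)]) ω ≤ B' * (κ (j-1) ω : ℝ) := h1
          _ ≤ B' * ((K:ℝ) * m ^ (j-1)) := mul_le_mul_of_nonneg_left hκb hB'
          _ = B' * K * m ^ (j-1) := by ring
      · have hg0 : g K j ω = 0 := by simp [hgdef, Set.indicator_of_notMem hω]
        rw [hg0, zero_mul]
        positivity
    have hInt2 : Integrable (g K j * P[fun ω => D j ω ^ 2|𝓕 (j-1)]) P := by
      refine Integrable.bdd_mul integrable_condExp hgm0.aestronglyMeasurable (c := 1) (Eventually.of_forall fun ω => ?_)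
      rcases hg01 K j ω with h | h <;> simp [h]
    calc ∫ ω, Dg K j ω ^ 2 ∂P = ∫ ω, (g K j * fun ω' => D j ω' ^ 2) ω ∂P := by
          refine integral_congr_ae (Eventually.of_forall fun ω => ?_)
          simp only [Pi.mul_apply]; exact hDg_sq K j ω
      _ = ∫ ω, (P[g K j * fun ω' => D j ω' ^ 2|𝓕 (j-1)]) ω ∂P :=
          (integral_condExp (hle (j-1))).symm
      _ = ∫ ω, (g K j * P[fun ω' => D j ω' ^ 2|𝓕 (j-1)]) ω ∂P := integral_congr_ae hpull
      _ ≤ ∫ _ω, (B' * K * m ^ (j - 1)) ∂P := integral_mono_ae hInt2 (integrable_const _) hbound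
      _ = B' * K * m ^ (j - 1) := by simp
  -- second moment of partial sums
  set S : ℕ → ℕ → Ω → ℝ := fun K J ω => ∑ j ∈ Finset.Icc 1 J, Dg K j ω with hSdef
  set Cc : ℕ → ℝ := fun K => B' * K / (m - 1) with hCcdef
  have hCc : ∀ K, 0 ≤ Cc K := by
    intro K
    have : (0:ℝ) < m - 1 := by linarith
    positivity
  have hSsq_expand : ∀ K J ω, S K J ω ^ 2 =
      ∑ j ∈ Finset.Icc 1 J, ∑ i ∈ Finset.Icc 1 J, Dg K j ω * Dg K i ω := by
    intro K J ω
    rw [hSdef]; rw [sq, Finset.sum_mul_sum]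
  have hS2int : ∀ K J, Integrable (fun ω => S K J ω ^ 2) P := by
    intro K J
    have : (fun ω => S K J ω ^ 2) =
        fun ω => ∑ j ∈ Finset.Icc 1 J, ∑ i ∈ Finset.Icc 1 J, Dg K j ω * Dg K i ω := by
      funext ω; exact hSsq_expand K J ω
    rw [this]
    refine integrable_finset_sum _ fun j hj => integrable_finset_sum _ fun i hi => ?_
    exact hprodint K i j (Finset.mem_Icc.mp hi).1 (Finset.mem_Icc.mp hj).1
  have hS2 : ∀ K J, ∫ ω, S K J ω ^ 2 ∂P ≤ Cc K * m ^ J := by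
    intro K J
    have hint : ∫ ω, S K J ω ^ 2 ∂P =
        ∑ j ∈ Finset.Icc 1 J, ∑ i ∈ Finset.Icc 1 J, ∫ ω, Dg K j ω * Dg K i ω ∂P := by
      calc ∫ ω, S K J ω ^ 2 ∂P
          = ∫ ω, ∑ j ∈ Finset.Icc 1 J, ∑ i ∈ Finset.Icc 1 J, Dg K j ω * Dg K i ω ∂P := by
            refine integral_congr_ae (Eventually.of_forall fun ω => hSsq_expand K J ω)
        _ = ∑ j ∈ Finset.Icc 1 J, ∫ ω, ∑ i ∈ Finset.Icc 1 J, Dg K j ω * Dg K i ω ∂P := by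
            refine integral_finset_sum _ fun j hj => integrable_finset_sum _ fun i hi => ?_
            exact hprodint K i j (Finset.mem_Icc.mp hi).1 (Finset.mem_Icc.mp hj).1
        _ = ∑ j ∈ Finset.Icc 1 J, ∑ i ∈ Finset.Icc 1 J, ∫ ω, Dg K j ω * Dg K i ω ∂P := by
            refine Finset.sum_congr rfl fun j hj => ?_
            exact integral_finset_sum _ fun i hi =>
              hprodint K i j (Finset.mem_Icc.mp hi).1 (Finset.mem_Icc.mp hj).1
    have hdiagsum : ∀ j ∈ Finset.Icc 1 J,
        ∑ i ∈ Finset.Icc 1 J, ∫ ω, Dg K j ω * Dg K i ω ∂P = ∫ ω, Dg K j ω ^ 2 ∂P := by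
      intro j hj
      rw [Finset.sum_eq_single j]
      · refine integral_congr_ae (Eventually.of_forall fun ω => ?_)
        show Dg K j ω * Dg K j ω = Dg K j ω ^ 2
        ring
      · intro i hi hij
        rcases lt_or_gt_of_ne hij with h | h
        · exact hcross K i j (Finset.mem_Icc.mp hi).1 h
        · rw [show (fun ω => Dg K j ω * Dg K i ω) = fun ω => Dg K i ω * Dg K j ω by
            funext ω; ring]
          exact hcross K j i (Finset.mem_Icc.mp hj).1 h
      · intro h; exact absurd hj h
    rw [hint]
    calc ∑ j ∈ Finset.Icc 1 J, ∑ i ∈ Finset.Icc 1 J, ∫ ω, Dg K j ω * Dg K i ω ∂P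
        = ∑ j ∈ Finset.Icc 1 J, ∫ ω, Dg K j ω ^ 2 ∂P := Finset.sum_congr rfl hdiagsum
      _ ≤ ∑ j ∈ Finset.Icc 1 J, B' * K * m ^ (j - 1) := by
          refine Finset.sum_le_sum fun j hj => hdiag K j (Finset.mem_Icc.mp hj).1
      _ = B' * K * ∑ j ∈ Finset.Icc 1 J, m ^ (j - 1) := by rw [Finset.mul_sum]
      _ = B' * K * ∑ i ∈ Finset.range J, m ^ i := by
          congr 1
          rw [show Finset.Icc 1 J = Finset.Ico 1 (J+1) by rw [Finset.Ico_add_one_right_eq_Icc],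
            Finset.sum_Ico_eq_sum_range]
          refine Finset.sum_congr (by norm_num) fun i _ => by congr 1; omega
      _ ≤ Cc K * m ^ J := by
          rw [geom_sum_eq (ne_of_gt hm)]
          rw [hCcdef]
          have hm1 : (0:ℝ) < m - 1 := by linarith
          have h1 : (m ^ J - 1) / (m - 1) ≤ m ^ J / (m - 1) :=
            (div_le_div_iff_of_pos_right hm1).mpr (by linarith)
          calc B' * K * ((m ^ J - 1) / (m - 1)) ≤ B' * K * (m ^ J / (m - 1)) := by
                refine mul_le_mul_of_nonneg_left h1 (by positivity)
            _ = B' * K / (m - 1) * m ^ J := by ring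
  -- a.s. convergence of |S K J| / m^J to 0, for each K
  have hSmeas : ∀ K J, Measurable (S K J) := by
    intro K J
    exact Finset.measurable_sum _ fun j hj => hDgm0 K j (Finset.mem_Icc.mp hj).1
  have key : ∀ K : ℕ, ∀ᵐ ω ∂P, Tendsto (fun J => |S K J ω| / m ^ J) atTop (nhds 0) := by
    intro K
    set x : ℕ → Ω → ℝ := fun J ω => (S K J ω / m ^ J) ^ 2 with hxdef
    have hxnonneg : ∀ J ω, 0 ≤ x J ω := fun J ω => sq_nonneg _
    have hxint : ∀ J, Integrable (x J) P := by
      intro J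
      have : x J = fun ω => S K J ω ^ 2 / (m ^ J) ^ 2 := by
        funext ω
        show (S K J ω / m ^ J) ^ 2 = S K J ω ^ 2 / (m ^ J) ^ 2
        rw [div_pow]
      rw [this]
      exact (hS2int K J).div_const _
    have hxbound : ∀ J, ∫ ω, x J ω ∂P ≤ Cc K * (1 / m) ^ J := by
      intro J
      have h1 : ∫ ω, x J ω ∂P = (∫ ω, S K J ω ^ 2 ∂P) / (m ^ J) ^ 2 := by
        rw [show ∫ ω, x J ω ∂P = ∫ ω, S K J ω ^ 2 / (m ^ J) ^ 2 ∂P from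
          integral_congr_ae (Eventually.of_forall fun ω =>
            show (S K J ω / m ^ J) ^ 2 = S K J ω ^ 2 / (m ^ J) ^ 2 from div_pow _ _ _)]
        exact integral_div _ _
      rw [h1]
      have hmJ : (0:ℝ) < (m ^ J) ^ 2 := by positivity
      calc (∫ ω, S K J ω ^ 2 ∂P) / (m ^ J) ^ 2 ≤ (Cc K * m ^ J) / (m ^ J) ^ 2 :=
            (div_le_div_iff_of_pos_right hmJ).mpr (hS2 K J)
        _ = Cc K * (1 / m) ^ J := by
            rw [div_pow, one_pow]
            field_simp
    have hsummable : Summable (fun J => Cc K * (1 / m) ^ J) := by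
      refine Summable.mul_left _ (summable_geometric_of_lt_one (by positivity) ?_)
      rw [div_lt_one hmpos]; exact hm
    have hlin : ∀ J, ∫⁻ ω, ENNReal.ofReal (x J ω) ∂P ≤ ENNReal.ofReal (Cc K * (1 / m) ^ J) := by
      intro J
      rw [← ofReal_integral_eq_lintegral_ofReal (hxint J)
        (Eventually.of_forall fun ω => hxnonneg J ω)]
      exact ENNReal.ofReal_le_ofReal (hxbound J)
    have htsum : ∑' J, ∫⁻ ω, ENNReal.ofReal (x J ω) ∂P ≠ ⊤ := by
      refine ne_of_lt (lt_of_le_of_lt (ENNReal.tsum_le_tsum hlin) ?_)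
      rw [← ENNReal.ofReal_tsum_of_nonneg
        (fun J => mul_nonneg (hCc K) (by positivity)) hsummable]
      exact ENNReal.ofReal_lt_top
    have hxmeas : ∀ J, Measurable fun ω => ENNReal.ofReal (x J ω) := by
      intro J
      exact ENNReal.measurable_ofReal.comp (((hSmeas K J).div_const _).pow_const 2)
    have hlt : ∀ᵐ ω ∂P, ∑' J, ENNReal.ofReal (x J ω) < ⊤ := by
      refine ae_lt_top (Measurable.ennreal_tsum hxmeas) ?_
      rw [lintegral_tsum fun J => (hxmeas J).aemeasurable]
      exact htsum
    filter_upwards [hlt] with ω hω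
    have hsum : Summable (fun J => x J ω) := by
      have h1 := ENNReal.summable_toReal (ne_of_lt hω)
      have h2 : (fun J => (ENNReal.ofReal (x J ω)).toReal) = fun J => x J ω := by
        funext J; exact ENNReal.toReal_ofReal (hxnonneg J ω)
      rwa [h2] at h1
    have hx0 : Tendsto (fun J => x J ω) atTop (nhds 0) := hsum.tendsto_atTop_zero
    have hsqrt : Tendsto (fun J => Real.sqrt (x J ω)) atTop (nhds 0) := by
      have := (Real.continuous_sqrt.tendsto 0).comp hx0
      rwa [Real.sqrt_zero] at this
    refine hsqrt.congr fun J => ?_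
    rw [hxdef, Real.sqrt_sq_eq_abs, abs_div, abs_of_pos (by positivity : (0:ℝ) < m ^ J)]
  -- assemble
  rw [← ae_all_iff] at key
  filter_upwards [hconv, key] with ω hconvω hkey hδI
  -- choose K bounding κ j ω / m^j
  obtain ⟨C, hC⟩ : ∃ C : ℝ, ∀ j, (κ j ω : ℝ) / m ^ j ≤ C := by
    obtain ⟨C, hC⟩ := hconvω.bddAbove_range
    exact ⟨C, fun j => hC (Set.mem_range_self j)⟩
  set K := ⌈C⌉₊ with hKdef
  have hKb : ∀ j, (κ j ω : ℝ) ≤ (K:ℝ) * m ^ j := by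
    intro j
    have h1 : (κ j ω : ℝ) ≤ C * m ^ j := by
      have := hC j
      rw [div_le_iff₀ (by positivity : (0:ℝ) < m ^ j)] at this
      exact this
    refine h1.trans (mul_le_mul_of_nonneg_right (Nat.le_ceil C) (by positivity))
  have hωA : ∀ j, ω ∈ A K j := fun j i _ => hKb i
  have hSeq : ∀ J, S K J ω = ∑ j ∈ Finset.Icc 1 J, D j ω := by
    intro J
    refine Finset.sum_congr rfl fun j _ => ?_
    rw [hDgdef]
    simp [hgone K j ω (hωA j)]
  -- numerator tendsto
  have hnum : Tendsto (fun J => |∑ j ∈ Finset.Icc 1 J, D j ω| / m ^ J) atTop (nhds 0) := by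
    refine (hkey K).congr fun J => ?_
    rw [hSeq J]
  -- denominator lower bound
  have hev : ∀ᶠ j in atTop, δ * m ^ j < (κ j ω : ℝ) := by
    have h1 : ∀ᶠ j in atTop, δ < (κ j ω : ℝ) / m ^ j :=
      hconvω.eventually (eventually_gt_nhds hδI)
    filter_upwards [h1] with j hj
    rwa [lt_div_iff₀ (by positivity : (0:ℝ) < m ^ j)] at hj
  obtain ⟨N, hN⟩ := hev.exists_forall_of_atTop
  have hκnonneg : ∀ j, (0:ℝ) ≤ (κ j ω : ℝ) := fun j => Nat.cast_nonneg _
  have hdenom : ∀ J, N + 1 ≤ J → δ / m * m ^ J ≤ ∑ j ∈ Finset.range J, (κ j ω : ℝ) := by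
    intro J hJ
    have hJ1 : J - 1 ∈ Finset.range J := Finset.mem_range.mpr (by omega)
    have h1 : (κ (J-1) ω : ℝ) ≤ ∑ j ∈ Finset.range J, (κ j ω : ℝ) :=
      Finset.single_le_sum (fun j _ => hκnonneg j) hJ1
    have h2 : δ * m ^ (J-1) < (κ (J-1) ω : ℝ) := hN (J-1) (by omega)
    have h3 : δ / m * m ^ J = δ * m ^ (J - 1) := by
      rw [show J = (J-1) + 1 by omega]
      simp only [Nat.add_sub_cancel]
      rw [pow_succ]
      field_simp
    rw [h3]
    linarith
  -- conclude by squeeze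
  have hfinal : Tendsto (fun J => m / δ * (|∑ j ∈ Finset.Icc 1 J, D j ω| / m ^ J))
      atTop (nhds 0) := by
    have := hnum.const_mul (m / δ)
    rwa [mul_zero] at this
  refine squeeze_zero_norm' ?_ hfinal
  filter_upwards [eventually_ge_atTop (N+1)] with J hJ
  have hden := hdenom J hJ
  have hdenpos : (0:ℝ) < ∑ j ∈ Finset.range J, (κ j ω : ℝ) := by
    have : (0:ℝ) < δ / m * m ^ J := by positivity
    linarith
  rw [Real.norm_eq_abs, abs_div, abs_of_pos hdenpos]
  calc |∑ j ∈ Finset.Icc 1 J, D j ω| / ∑ j ∈ Finset.range J, (κ j ω : ℝ)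
      ≤ |∑ j ∈ Finset.Icc 1 J, D j ω| / (δ / m * m ^ J) := by
        apply div_le_div_of_nonneg_left (abs_nonneg _) (by positivity) hden
    _ = m / δ * (|∑ j ∈ Finset.Icc 1 J, D j ω| / m ^ J) := by
        field_simp
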